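/- arXiv:0906.0476 — 4 statements merged into one kernel-verified Lean document; each statement's English description precedes it below -/
import Mathlib

section
/- Let (X,d) be a proper geodesic metric space, L : [0,∞) → [0,∞) increasing, convex, superlinear with L(0)=0, and g : X → ℝ Lipschitz. Then the Hopf–Lax semigroup satisfies the semigroup property: for all 0 ≤ s < t and all x ∈ X, Q_t g(x) = min_{y ∈ X} [ (t−s)·L(d(x,y)/(t−s)) + Q_s g(y) ], where Q_0 g = g. -/
open Metric Filter NNReal

/-- Hopf–Lax (infimum-convolution) semigroup, with `Q_0 g = g`. -/
noncomputable def hopfLaxQ {X : Type*} [MetricSpace X] (L : ℝ → ℝ) (g : X → ℝ)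
    (t : ℝ) (x : X) : ℝ :=
  if t = 0 then g x else ⨅ y : X, (t * L (dist x y / t) + g y)

/-- A convex increasing function on `[0,∞)` with `L 0 = 0` is continuous on `[0,∞)`. -/
lemma hopfLax_L_contOn {L : ℝ → ℝ} (hL0 : L 0 = 0)
    (hLnonneg : ∀ u, 0 ≤ u → 0 ≤ L u)
    (hLconv : ConvexOn ℝ (Set.Ici 0) L) : ContinuousOn L (Set.Ici 0) := by
  intro u hu
  rcases eq_or_lt_of_le (Set.mem_Ici.mp hu : (0:ℝ) ≤ u) with h0 | h0
  · subst h0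
    have hub : ∀ v ∈ Set.Icc (0:ℝ) 1, L v ≤ v * L 1 := by
      intro v hv
      have h := hLconv.2 (Set.self_mem_Ici) (by norm_num : (1:ℝ) ∈ Set.Ici 0)
        (by linarith [hv.2] : (0:ℝ) ≤ 1 - v) hv.1 (by ring)
      have : (1 - v) • (0:ℝ) + v • (1:ℝ) = v := by simp
      rw [this] at h
      simpa [hL0] using h
    have hIcc : Set.Icc (0:ℝ) 1 ∈ nhdsWithin (0:ℝ) (Set.Ici 0) := by
      have h1 : Set.Iic (1:ℝ) ∈ nhds (0:ℝ) := Iic_mem_nhds (by norm_num)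
      have h2 := Filter.inter_mem (nhdsWithin_le_nhds (s := Set.Ici (0:ℝ)) h1)
        (self_mem_nhdsWithin (a := (0:ℝ)) (s := Set.Ici 0))
      have h3 : Set.Iic (1:ℝ) ∩ Set.Ici 0 = Set.Icc (0:ℝ) 1 := by
        ext v; simp [and_comm]
      rwa [h3] at h2
    have hsq : Filter.Tendsto L (nhdsWithin (0:ℝ) (Set.Ici 0)) (nhds 0) := by
      apply tendsto_of_tendsto_of_tendsto_of_le_of_le'
        (tendsto_const_nhds : Filter.Tendsto (fun _ : ℝ => (0:ℝ)) _ _)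
        (show Filter.Tendsto (fun v : ℝ => v * L 1) (nhdsWithin 0 (Set.Ici 0)) (nhds 0) by
          have : Filter.Tendsto (fun v : ℝ => v * L 1) (nhds 0) (nhds (0 * L 1)) :=
            (continuous_id.mul continuous_const).tendsto 0
          simpa using this.mono_left nhdsWithin_le_nhds)
      · filter_upwards [self_mem_nhdsWithin] with v hv
        exact hLnonneg v hv
      · filter_upwards [hIcc] with v hv
        exact hub v hv
    simpa [ContinuousWithinAt, hL0] using hsq
  · have hconvIoi : ConvexOn ℝ (Set.Ioi (0:ℝ)) L :=
      hLconv.subset Set.Ioi_subset_Ici_self (convex_Ioi 0)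
    exact ((hconvIoi.continuousOn isOpen_Ioi).continuousAt
      (Ioi_mem_nhds h0)).continuousWithinAt

/-- Linear lower bound from superlinearity. -/
lemma hopfLax_L_linLB {L : ℝ → ℝ}
    (hLnonneg : ∀ u, 0 ≤ u → 0 ≤ L u)
    (hLsuper : Tendsto (fun u => L u / u) atTop atTop) (K : ℝ) :
    ∃ C : ℝ, 0 ≤ C ∧ ∀ u, 0 ≤ u → K * u - C ≤ L u := by
  obtain ⟨U, hU⟩ := (hLsuper.eventually_ge_atTop K).exists_forall_of_atTop
  set U' : ℝ := max U 1 with hU'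
  refine ⟨|K| * U', by positivity, fun u hu => ?_⟩
  rcases le_or_gt U' u with h | h
  · have hu1 : (1:ℝ) ≤ u := le_trans (le_max_right U 1) h
    have hupos : 0 < u := by linarith
    have hKu : K ≤ L u / u := hU u (le_trans (le_max_left U 1) h)
    have : K * u ≤ L u := by
      have := mul_le_mul_of_nonneg_right hKu hupos.le
      rwa [div_mul_cancel₀ _ hupos.ne'] at this
    nlinarith [abs_nonneg K, le_max_right U (1:ℝ)]
  · have h1 : K * u ≤ |K| * U' := by
      have : K * u ≤ |K| * u := mul_le_mul_of_nonneg_right (le_abs_self K) hu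
      nlinarith [abs_nonneg K]
    have := hLnonneg u hu
    linarith

section hopfLaxAux

variable {X : Type*} [MetricSpace X] [ProperSpace X] [Nonempty X]

/-- The Hopf–Lax infimand is bounded below. -/
lemma hopfLax_bddBelow {L : ℝ → ℝ}
    (hLnonneg : ∀ u, 0 ≤ u → 0 ≤ L u)
    (hLsuper : Tendsto (fun u => L u / u) atTop atTop)
    {g : X → ℝ} {K : ℝ≥0} (hg : LipschitzWith K g)
    {t : ℝ} (ht : 0 < t) (y : X) :
    BddBelow (Set.range fun z : X => t * L (dist y z / t) + g z) := by
  obtain ⟨C, hC0, hC⟩ := hopfLax_L_linLB hLnonneg hLsuper (K : ℝ)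
  refine ⟨g y - t * C, ?_⟩
  rintro _ ⟨z, rfl⟩
  have hd : 0 ≤ dist y z := dist_nonneg
  have h1 : (K : ℝ) * (dist y z / t) - C ≤ L (dist y z / t) :=
    hC _ (by positivity)
  have h2 : g y - (K : ℝ) * dist y z ≤ g z := by
    have := hg.dist_le_mul y z
    have habs : |g y - g z| ≤ (K : ℝ) * dist y z := by
      rwa [Real.dist_eq] at this
    linarith [abs_le.mp habs |>.2]
  have h3 : t * ((K : ℝ) * (dist y z / t) - C) ≤ t * L (dist y z / t) :=
    mul_le_mul_of_nonneg_left h1 ht.le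
  have h4 : t * ((K : ℝ) * (dist y z / t) - C) = (K : ℝ) * dist y z - t * C := by
    field_simp
  rw [h4] at h3
  simp only []
  linarith

/-- Existence of a minimizer of the Hopf–Lax infimand. -/
lemma hopfLax_exists_min {L : ℝ → ℝ} (hL0 : L 0 = 0)
    (hLnonneg : ∀ u, 0 ≤ u → 0 ≤ L u)
    (hLconv : ConvexOn ℝ (Set.Ici 0) L)
    (hLsuper : Tendsto (fun u => L u / u) atTop atTop)
    {g : X → ℝ} {K : ℝ≥0} (hg : LipschitzWith K g)
    {t : ℝ} (ht : 0 < t) (y : X) :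
    ∃ z : X, ∀ w : X, t * L (dist y z / t) + g z ≤ t * L (dist y w / t) + g w := by
  set F : X → ℝ := fun z => t * L (dist y z / t) + g z with hF
  obtain ⟨U, hU⟩ := (hLsuper.eventually_ge_atTop (K : ℝ)).exists_forall_of_atTop
  set U' : ℝ := max U 1 with hU'def
  set R : ℝ := t * U' with hRdef
  have hU'pos : (0:ℝ) < U' := lt_of_lt_of_le one_pos (le_max_right U 1)
  have hRpos : 0 < R := mul_pos ht hU'pos
  -- outside the ball, F w ≥ F y
  have hout : ∀ w : X, R ≤ dist y w → F y ≤ F w := by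
    intro w hw
    have hd : 0 ≤ dist y w := dist_nonneg
    have hu : U' ≤ dist y w / t := (le_div_iff₀ ht).2 (by rw [mul_comm]; exact hw)
    have hupos : 0 < dist y w / t := lt_of_lt_of_le hU'pos hu
    have hKu : (K : ℝ) ≤ L (dist y w / t) / (dist y w / t) :=
      hU _ (le_trans (le_max_left U 1) hu)
    have hKL : (K : ℝ) * (dist y w / t) ≤ L (dist y w / t) := by
      have := mul_le_mul_of_nonneg_right hKu hupos.le
      rwa [div_mul_cancel₀ _ hupos.ne'] at this
    have h2 : g y - (K : ℝ) * dist y w ≤ g w := by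
      have := hg.dist_le_mul y w
      rw [Real.dist_eq] at this
      linarith [abs_le.mp this |>.2]
    have h3 : (K : ℝ) * dist y w ≤ t * L (dist y w / t) := by
      have := mul_le_mul_of_nonneg_left hKL ht.le
      have he : t * ((K : ℝ) * (dist y w / t)) = (K : ℝ) * dist y w := by
        field_simp
      rw [he] at this
      exact this
    have hFy : F y = g y := by simp [hF, hL0]
    rw [hFy]
    simp only [hF]
    linarith
  -- continuity of F on the closed ball
  have hFcont : ContinuousOn F (closedBall y R) := by
    have hc1 : Continuous fun z : X => dist y z / t :=
      (continuous_const.dist continuous_id).div_const t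
    have hmaps : ∀ z : X, dist y z / t ∈ Set.Ici (0:ℝ) := fun z => Set.mem_Ici.2 (by positivity)
    have hLc : ContinuousOn L (Set.Ici 0) := hopfLax_L_contOn hL0 hLnonneg hLconv
    have : ContinuousOn (fun z : X => L (dist y z / t)) Set.univ :=
      hLc.comp hc1.continuousOn (fun z _ => hmaps z)
    exact ((continuousOn_const.mul (this.mono (Set.subset_univ _))).add
      hg.continuous.continuousOn)
  obtain ⟨z, hzmem, hzmin⟩ := (isCompact_closedBall y R).exists_isMinOn
    ⟨y, mem_closedBall_self hRpos.le⟩ hFcont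
  refine ⟨z, fun w => ?_⟩
  rcases le_or_gt (dist y w) R with h | h
  · exact hzmin (mem_closedBall'.2 h)
  · exact le_trans (hzmin (mem_closedBall_self hRpos.le)) (hout w h.le)

end hopfLaxAux

/-- Semigroup property of the Hopf–Lax formula: for `0 ≤ s < t`,
`Q_t g(x)` is the minimum over `y` of `(t-s)·L(d(x,y)/(t-s)) + Q_s g(y)`. -/
theorem hopfLax_semigroup
    {X : Type*} [MetricSpace X] [ProperSpace X] [Nonempty X]
    (hgeo : ∀ x y : X, ∀ τ : ℝ, 0 ≤ τ → τ ≤ 1 →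
      ∃ z : X, dist x z = τ * dist x y ∧ dist z y = (1 - τ) * dist x y)
    (L : ℝ → ℝ) (hL0 : L 0 = 0)
    (hLnonneg : ∀ u, 0 ≤ u → 0 ≤ L u)
    (hLmono : MonotoneOn L (Set.Ici 0))
    (hLconv : ConvexOn ℝ (Set.Ici 0) L)
    (hLsuper : Tendsto (fun u => L u / u) atTop atTop)
    (g : X → ℝ) (hg : ∃ K : ℝ≥0, LipschitzWith K g)
    (s t : ℝ) (hs : 0 ≤ s) (hst : s < t) (x : X) :
    IsLeast (Set.range fun y : X => ((t - s) * L (dist x y / (t - s)) + hopfLaxQ L g s y))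
      (hopfLaxQ L g t x) := by
  obtain ⟨K, hK⟩ := hg
  have ht : 0 < t := lt_of_le_of_lt hs hst
  have ht0 : t ≠ 0 := ht.ne'
  have hts : 0 < t - s := sub_pos.2 hst
  have hts0 : t - s ≠ 0 := hts.ne'
  have hQt : hopfLaxQ L g t x = ⨅ z : X, (t * L (dist x z / t) + g z) := if_neg ht0
  have hbddt := hopfLax_bddBelow hLnonneg hLsuper hK ht x
  -- the lower bound part
  have hlb : ∀ y : X,
      hopfLaxQ L g t x ≤ (t - s) * L (dist x y / (t - s)) + hopfLaxQ L g s y := by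
    intro y
    rcases eq_or_lt_of_le hs with hs0 | hspos
    · -- s = 0
      subst hs0
      rw [hQt, show hopfLaxQ L g 0 y = g y from if_pos rfl]
      have := ciInf_le hbddt y
      simpa using this
    · -- s > 0
      have hs0 : s ≠ 0 := hspos.ne'
      rw [hQt, show hopfLaxQ L g s y = ⨅ z : X, (s * L (dist y z / s) + g z) from if_neg hs0]
      rw [← sub_le_iff_le_add']
      refine le_ciInf fun z => ?_
      rw [sub_le_iff_le_add']
      have hkey : t * L (dist x z / t) ≤
          (t - s) * L (dist x y / (t - s)) + s * L (dist y z / s) := by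
        set a := dist x y with ha
        set b := dist y z with hb
        have ha0 : 0 ≤ a := dist_nonneg
        have hb0 : 0 ≤ b := dist_nonneg
        have hd : dist x z ≤ a + b := dist_triangle x y z
        have h1 : L (dist x z / t) ≤ L ((a + b) / t) :=
          hLmono (Set.mem_Ici.2 (by positivity)) (Set.mem_Ici.2 (by positivity))
            (by gcongr)
        have hcvx := hLconv.2 (Set.mem_Ici.2 (show (0:ℝ) ≤ a / (t - s) by positivity))
          (Set.mem_Ici.2 (show (0:ℝ) ≤ b / s by positivity))
          (show (0:ℝ) ≤ (t - s) / t by positivity)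
          (show (0:ℝ) ≤ s / t by positivity)
          (by field_simp; ring)
        have hcomb : ((t - s) / t) • (a / (t - s)) + (s / t) • (b / s) = (a + b) / t := by
          simp only [smul_eq_mul]
          field_simp
        rw [hcomb] at hcvx
        have h2 : t * L ((a + b) / t) ≤
            t * (((t - s) / t) * L (a / (t - s)) + (s / t) * L (b / s)) :=
          mul_le_mul_of_nonneg_left hcvx ht.le
        have h3 : t * (((t - s) / t) * L (a / (t - s)) + (s / t) * L (b / s)) =
            (t - s) * L (a / (t - s)) + s * L (b / s) := by
          field_simp
        have h4 : t * L (dist x z / t) ≤ t * L ((a + b) / t) :=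
          mul_le_mul_of_nonneg_left h1 ht.le
        linarith
      calc (⨅ w : X, (t * L (dist x w / t) + g w)) ≤ t * L (dist x z / t) + g z :=
            ciInf_le hbddt z
        _ ≤ (t - s) * L (dist x y / (t - s)) + (s * L (dist y z / s) + g z) := by linarith
  -- the attainment part
  obtain ⟨z, hzmin⟩ := hopfLax_exists_min hL0 hLnonneg hLconv hLsuper hK ht x
  have hQval : hopfLaxQ L g t x = t * L (dist x z / t) + g z := by
    rw [hQt]
    exact le_antisymm (ciInf_le hbddt z) (le_ciInf hzmin)
  constructor
  · -- membership
    rcases eq_or_lt_of_le hs with hs0 | hspos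
    · subst hs0
      refine ⟨z, ?_⟩
      show (t - 0) * L (dist x z / (t - 0)) + hopfLaxQ L g 0 z = hopfLaxQ L g t x
      rw [show hopfLaxQ L g 0 z = g z from if_pos rfl, hQval]
      norm_num
    · have hs0 : s ≠ 0 := hspos.ne'
      set d := dist x z with hd
      have hd0 : 0 ≤ d := dist_nonneg
      obtain ⟨y, hy1, hy2⟩ := hgeo x z ((t - s) / t)
        (by positivity) (by rw [div_le_one ht]; linarith)
      have hyd : dist x y = (t - s) / t * d := hy1
      have hzd : dist y z = s / t * d := by
        have hτ : 1 - (t - s) / t = s / t := by field_simp; ring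
        rw [hy2, hτ]
      refine ⟨y, ?_⟩
      have e1 : dist x y / (t - s) = d / t := by
        rw [hyd]; field_simp
      have e2 : dist y z / s = d / t := by
        rw [hzd]; field_simp
      have hQs : hopfLaxQ L g s y ≤ s * L (d / t) + g z := by
        rw [show hopfLaxQ L g s y = ⨅ z : X, (s * L (dist y z / s) + g z) from if_neg hs0]
        have := ciInf_le (hopfLax_bddBelow hLnonneg hLsuper hK hspos y) z
        rwa [e2] at this
      have hle : (t - s) * L (dist x y / (t - s)) + hopfLaxQ L g s y ≤ hopfLaxQ L g t x := by
        rw [e1, hQval]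
        have : (t - s) * L (d / t) + (s * L (d / t) + g z) = t * L (d / t) + g z := by ring
        linarith
      exact le_antisymm hle (hlb y)
  · rintro v ⟨y, rfl⟩
    exact hlb y
end

section
/- Let (X,d) be a proper geodesic metric space, L : [0,∞) → [0,∞) increasing, convex, superlinear with L(0)=0, H(w) = sup_{v ≥ 0} (w·v − L(v)) its Legendre transform, and g : X → ℝ Lipschitz with Lipschitz constant lip(g). Then for every fixed x ∈ X and all s, t > 0, |Q_t g(x) − Q_s g(x)| ≤ H(lip(g))·|t − s|. -/
open Metric Filter NNReal

/-- The (one-dimensional) Legendre transform `H(w) = sup_{v ≥ 0} (w·v − L(v))`. -/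
noncomputable def legendreH (L : ℝ → ℝ) (w : ℝ) : ℝ :=
  sSup ((fun v => w * v - L v) '' Set.Ici 0)

-- linear lower bound from superlinearity
lemma exists_linear_lb (L : ℝ → ℝ) (hLnonneg : ∀ u, 0 ≤ u → 0 ≤ L u)
    (hLsuper : Tendsto (fun u => L u / u) atTop atTop) (K : ℝ) (hK : 0 ≤ K) :
    ∃ C : ℝ, 0 ≤ C ∧ ∀ u, 0 ≤ u → (K + 1) * u - C ≤ L u := by
  obtain ⟨u0, h⟩ := eventually_atTop.1 (hLsuper.eventually_ge_atTop (K + 1))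
  set u1 := max u0 1 with hu1
  have hu1pos : (0:ℝ) < u1 := lt_of_lt_of_le one_pos (le_max_right _ _)
  refine ⟨(K + 1) * u1, by positivity, fun u hu => ?_⟩
  rcases le_or_gt u u1 with h' | h'
  · have := hLnonneg u hu
    nlinarith
  · have hu0le : u0 ≤ u := le_trans (le_max_left _ _) h'.le
    have h2 : K + 1 ≤ L u / u := h u hu0le
    have hupos : 0 < u := lt_trans hu1pos h'
    have h3 : (K + 1) * u ≤ L u := by
      exact (le_div_iff₀ hupos).1 h2
    nlinarith

lemma legendreH_ge (L : ℝ → ℝ) (hLnonneg : ∀ u, 0 ≤ u → 0 ≤ L u)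
    (hLsuper : Tendsto (fun u => L u / u) atTop atTop) (K : ℝ) (hK : 0 ≤ K) :
    ∀ v, 0 ≤ v → K * v - L v ≤ legendreH L K := by
  obtain ⟨C, hC0, hC⟩ := exists_linear_lb L hLnonneg hLsuper K hK
  have hbdd : BddAbove ((fun v => K * v - L v) '' Set.Ici 0) := by
    refine ⟨C, fun z hz => ?_⟩
    obtain ⟨v, hv, rfl⟩ := hz
    have hv' : (0:ℝ) ≤ v := hv
    have := hC v hv'
    simp only
    linarith
  intro v hv
  exact le_csSup hbdd ⟨v, hv, rfl⟩

lemma legendreH_nonneg (L : ℝ → ℝ) (hL0 : L 0 = 0)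
    (hLnonneg : ∀ u, 0 ≤ u → 0 ≤ L u)
    (hLsuper : Tendsto (fun u => L u / u) atTop atTop) (K : ℝ) (hK : 0 ≤ K) :
    0 ≤ legendreH L K := by
  have := legendreH_ge L hLnonneg hLsuper K hK 0 le_rfl
  simpa [hL0] using this

lemma bddBelow_hopfLax {X : Type*} [MetricSpace X] (L : ℝ → ℝ) (g : X → ℝ)
    (Kg : ℝ≥0) (hg : LipschitzWith Kg g) (C : ℝ) (hC0 : 0 ≤ C)
    (hC : ∀ u, 0 ≤ u → ((Kg:ℝ) + 1) * u - C ≤ L u) (t : ℝ) (ht : 0 < t) (x : X) :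
    BddBelow (Set.range fun y : X => t * L (dist x y / t) + g y) := by
  refine ⟨g x - t * C, fun z hz => ?_⟩
  obtain ⟨y, rfl⟩ := hz
  have hd : 0 ≤ dist x y := dist_nonneg
  have h1 : ((Kg:ℝ) + 1) * (dist x y / t) - C ≤ L (dist x y / t) := hC _ (by positivity)
  have h2 : g x - g y ≤ (Kg:ℝ) * dist x y := by
    have := hg.dist_le_mul x y
    rw [Real.dist_eq] at this
    exact (abs_le.1 this).2
  have h3 : t * (((Kg:ℝ) + 1) * (dist x y / t) - C) ≤ t * L (dist x y / t) :=
    mul_le_mul_of_nonneg_left h1 ht.le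
  have h4 : t * (((Kg:ℝ) + 1) * (dist x y / t)) = ((Kg:ℝ) + 1) * dist x y := by
    field_simp
  simp only
  nlinarith

lemma convex_scale (L : ℝ → ℝ) (hL0 : L 0 = 0) (hLconv : ConvexOn ℝ (Set.Ici 0) L)
    (a u : ℝ) (ha0 : 0 ≤ a) (ha1 : a ≤ 1) (hu : 0 ≤ u) : L (a * u) ≤ a * L u := by
  have := hLconv.2 (Set.mem_Ici.2 hu) (Set.mem_Ici.2 (le_refl (0:ℝ))) ha0
    (by linarith : 0 ≤ 1 - a) (by ring)
  simp only [smul_eq_mul, mul_zero, add_zero, hL0] at this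
  linarith

lemma hopfLax_core {X : Type*} [MetricSpace X] [Nonempty X]
    (hgeo : ∀ x y : X, ∀ τ : ℝ, 0 ≤ τ → τ ≤ 1 →
      ∃ z : X, dist x z = τ * dist x y ∧ dist z y = (1 - τ) * dist x y)
    (L : ℝ → ℝ) (hL0 : L 0 = 0)
    (hLnonneg : ∀ u, 0 ≤ u → 0 ≤ L u)
    (hLconv : ConvexOn ℝ (Set.Ici 0) L)
    (hLsuper : Tendsto (fun u => L u / u) atTop atTop)
    (g : X → ℝ) (Kg : ℝ≥0) (hg : LipschitzWith Kg g)
    (x : X) (s t : ℝ) (hs : 0 < s) (ht : 0 < t) (hst : s ≤ t) :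
    hopfLaxQ L g t x ≤ hopfLaxQ L g s x ∧
    hopfLaxQ L g s x - legendreH L (Kg : ℝ) * (t - s) ≤ hopfLaxQ L g t x := by
  obtain ⟨C, hC0, hC⟩ := exists_linear_lb L hLnonneg hLsuper (Kg : ℝ) Kg.coe_nonneg
  have bddt := bddBelow_hopfLax L g Kg hg C hC0 hC t ht x
  have bdds := bddBelow_hopfLax L g Kg hg C hC0 hC s hs x
  have hQt : hopfLaxQ L g t x = ⨅ y : X, (t * L (dist x y / t) + g y) := if_neg ht.ne'
  have hQs : hopfLaxQ L g s x = ⨅ y : X, (s * L (dist x y / s) + g y) := if_neg hs.ne'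
  constructor
  · rw [hQt, hQs]
    refine ciInf_mono bddt fun y => ?_
    have hd : (0:ℝ) ≤ dist x y := dist_nonneg
    have key : L (dist x y / t) ≤ (s / t) * L (dist x y / s) := by
      have h1 : (s / t) * (dist x y / s) = dist x y / t := by
        field_simp
      have := convex_scale L hL0 hLconv (s / t) (dist x y / s) (by positivity)
        ((div_le_one ht).2 hst) (by positivity)
      rwa [h1] at this
    have h2 : t * L (dist x y / t) ≤ s * L (dist x y / s) := by
      have := mul_le_mul_of_nonneg_left key ht.le
      rwa [show t * ((s / t) * L (dist x y / s)) = s * L (dist x y / s) by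
        field_simp] at this
    linarith
  · rw [hQt, hQs]
    refine le_ciInf fun y => ?_
    have hd : (0:ℝ) ≤ dist x y := dist_nonneg
    set w : ℝ := dist x y / t with hw
    have hw0 : 0 ≤ w := by positivity
    obtain ⟨z, hz1, hz2⟩ := hgeo x y (s / t) (by positivity) ((div_le_one ht).2 hst)
    have hxz : dist x z / s = w := by
      rw [hz1, hw]; field_simp
    have hzy : dist z y = (t - s) * w := by
      rw [hz2, hw]; field_simp
    have key : (⨅ y : X, (s * L (dist x y / s) + g y)) ≤ s * L w + g z := by
      have := ciInf_le bdds z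
      rwa [hxz] at this
    have hgz : g z ≤ g y + (Kg : ℝ) * dist z y := by
      have := hg.dist_le_mul z y
      rw [Real.dist_eq] at this
      linarith [(abs_le.1 this).2]
    have hH : (Kg : ℝ) * w - L w ≤ legendreH L (Kg : ℝ) :=
      legendreH_ge L hLnonneg hLsuper (Kg : ℝ) Kg.coe_nonneg w hw0
    have hts : (0:ℝ) ≤ t - s := by linarith
    have hmain : (t - s) * ((Kg : ℝ) * w - L w) ≤ (t - s) * legendreH L (Kg : ℝ) :=
      mul_le_mul_of_nonneg_left hH hts
    rw [hzy] at hgz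
    nlinarith


/-- For fixed `x`, `t ↦ Q_t g(x)` is Lipschitz with constant `H(lip g)`. -/
theorem hopfLax_lipschitz_time
    {X : Type*} [MetricSpace X] [ProperSpace X] [Nonempty X]
    (hgeo : ∀ x y : X, ∀ τ : ℝ, 0 ≤ τ → τ ≤ 1 →
      ∃ z : X, dist x z = τ * dist x y ∧ dist z y = (1 - τ) * dist x y)
    (L : ℝ → ℝ) (hL0 : L 0 = 0)
    (hLnonneg : ∀ u, 0 ≤ u → 0 ≤ L u)
    (hLmono : MonotoneOn L (Set.Ici 0))
    (hLconv : ConvexOn ℝ (Set.Ici 0) L)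
    (hLsuper : Tendsto (fun u => L u / u) atTop atTop)
    (g : X → ℝ) (Kg : ℝ≥0) (hg : LipschitzWith Kg g)
    (x : X) (s t : ℝ) (hs : 0 < s) (ht : 0 < t) :
    |hopfLaxQ L g t x - hopfLaxQ L g s x| ≤ legendreH L (Kg : ℝ) * |t - s| := by
  rcases le_total s t with h | h
  · obtain ⟨h1, h2⟩ := hopfLax_core hgeo L hL0 hLnonneg hLconv hLsuper g Kg hg x s t hs ht h
    rw [abs_of_nonpos (by linarith), abs_of_nonneg (by linarith : (0:ℝ) ≤ t - s)]
    linarith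
  · obtain ⟨h1, h2⟩ := hopfLax_core hgeo L hL0 hLnonneg hLconv hLsuper g Kg hg x t s ht hs h
    rw [abs_of_nonneg (by linarith), abs_of_nonpos (by linarith : t - s ≤ 0)]
    linarith
end

section
/- Let (X,d) be a proper geodesic metric space, L : [0,∞) → [0,∞) increasing, convex, superlinear with L(0)=0, H its Legendre transform, and g : X → ℝ Lipschitz. Then for every x ∈ X and every t > 0 at which the function t ↦ Q_t g(x) is differentiable, one has (d/dt) Q_t g(x) + H(|∇⁻ Q_t g|(x)) ≤ 0, where |∇⁻ Q_t g|(x) is the metric subgradient of the function y ↦ Q_t g(y) at x. -/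
open Metric Filter NNReal Topology

/-- The metric subgradient `|∇⁻ f|(x₀) = limsup_{x → x₀} [f(x₀) − f(x)]₊ / d(x,x₀)`. -/
noncomputable def metricSubgradient {X : Type*} [MetricSpace X] (f : X → ℝ) (x₀ : X) : ℝ :=
  limsup (fun x => max (f x₀ - f x) 0 / dist x x₀) (𝓝[≠] x₀)

/-- At every point of differentiability in `t`, the Hopf–Lax semigroup is a
subsolution of the Hamilton–Jacobi equation: `∂_t Q_t g(x) + H(|∇⁻ Q_t g|(x)) ≤ 0`. -/
theorem hopfLax_subsolution
    {X : Type*} [MetricSpace X] [ProperSpace X] [Nonempty X]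
    (hgeo : ∀ x y : X, ∀ τ : ℝ, 0 ≤ τ → τ ≤ 1 →
      ∃ z : X, dist x z = τ * dist x y ∧ dist z y = (1 - τ) * dist x y)
    (L : ℝ → ℝ) (hL0 : L 0 = 0)
    (hLnonneg : ∀ u, 0 ≤ u → 0 ≤ L u)
    (hLmono : MonotoneOn L (Set.Ici 0))
    (hLconv : ConvexOn ℝ (Set.Ici 0) L)
    (hLsuper : Tendsto (fun u => L u / u) atTop atTop)
    (g : X → ℝ) (hg : ∃ K : ℝ≥0, LipschitzWith K g)
    (x : X) (t : ℝ) (ht : 0 < t)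
    (D : ℝ) (hD : HasDerivAt (fun s => hopfLaxQ L g s x) D t) :
    D + legendreH L (metricSubgradient (fun y => hopfLaxQ L g t y) x) ≤ 0 := by
  classical
  obtain ⟨K, hK⟩ := hg
  obtain ⟨M0, hM0⟩ := eventually_atTop.mp (hLsuper.eventually_ge_atTop ((K : ℝ) + 1))
  set M : ℝ := max M0 1 with hM
  have hM1 : (1 : ℝ) ≤ M := le_max_right _ _
  have hK0 : (0 : ℝ) ≤ K := K.coe_nonneg
  -- uniform lower bound for the infimand
  have key_lb : ∀ (s : ℝ), 0 < s → ∀ (z y : X),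
      g z - K * M * s ≤ s * L (dist z y / s) + g y := by
    intro s hs z y
    have hgzy : g z - K * dist z y ≤ g y := by
      have h1 := hK.dist_le_mul z y
      rw [Real.dist_eq] at h1
      linarith [(abs_le.mp h1).2]
    have hd0 : (0 : ℝ) ≤ dist z y := dist_nonneg
    have hds0 : (0 : ℝ) ≤ dist z y / s := div_nonneg hd0 hs.le
    by_cases hcase : M ≤ dist z y / s
    · have h1 : (K : ℝ) + 1 ≤ L (dist z y / s) / (dist z y / s) :=
        hM0 _ (le_trans (le_max_left _ _) hcase)
      have hds : (0 : ℝ) < dist z y / s := lt_of_lt_of_le one_pos (le_trans hM1 hcase)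
      have h2 : ((K : ℝ) + 1) * (dist z y / s) ≤ L (dist z y / s) :=
        (le_div_iff₀ hds).mp h1
      have h3 : ((K : ℝ) + 1) * dist z y ≤ s * L (dist z y / s) := by
        have := mul_le_mul_of_nonneg_left h2 hs.le
        calc ((K:ℝ)+1) * dist z y = s * (((K:ℝ)+1) * (dist z y / s)) := by
              field_simp
        _ ≤ s * L (dist z y / s) := this
      have hM0' : (0:ℝ) ≤ M := by linarith
      linarith [mul_nonneg (mul_nonneg hK0 hM0') hs.le]
    · push_neg at hcase
      have h1 : dist z y < M * s := by
        rw [div_lt_iff₀ hs] at hcase; linarith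
      have h2 : (0 : ℝ) ≤ s * L (dist z y / s) := mul_nonneg hs.le (hLnonneg _ hds0)
      nlinarith
  have bdd : ∀ (s : ℝ), 0 < s → ∀ z : X,
      BddBelow (Set.range fun y : X => s * L (dist z y / s) + g y) := by
    intro s hs z
    exact ⟨g z - K * M * s, by rintro _ ⟨y, rfl⟩; exact key_lb s hs z y⟩
  have hQ : ∀ (s : ℝ), 0 < s → ∀ z : X,
      hopfLaxQ L g s z = ⨅ y : X, (s * L (dist z y / s) + g y) := by
    intro s hs z; simp [hopfLaxQ, hs.ne']
  -- key subadditivity inequality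
  have lemA : ∀ h : ℝ, 0 < h → ∀ z : X,
      hopfLaxQ L g (t + h) x ≤ h * L (dist x z / h) + hopfLaxQ L g t z := by
    intro h hh z
    have hth : (0 : ℝ) < t + h := by linarith
    rw [hQ _ hth x, hQ t ht z]
    have step : ∀ y : X, (t + h) * L (dist x y / (t + h)) + g y ≤
        h * L (dist x z / h) + (t * L (dist z y / t) + g y) := by
      intro y
      set a := dist x z with ha
      set b := dist z y with hb
      have ha0 : (0 : ℝ) ≤ a := dist_nonneg
      have hb0 : (0 : ℝ) ≤ b := dist_nonneg
      have htri : dist x y ≤ a + b := dist_triangle x z y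
      have hmono : L (dist x y / (t + h)) ≤ L ((a + b) / (t + h)) := by
        apply hLmono (div_nonneg dist_nonneg hth.le)
          (div_nonneg (by linarith) hth.le)
        exact (div_le_div_iff_of_pos_right hth).mpr htri
      have hconv := hLconv.2 (show a / h ∈ Set.Ici (0:ℝ) from div_nonneg ha0 hh.le)
        (show b / t ∈ Set.Ici (0:ℝ) from div_nonneg hb0 ht.le)
        (show (0:ℝ) ≤ h / (t + h) from div_nonneg hh.le hth.le)
        (show (0:ℝ) ≤ t / (t + h) from div_nonneg ht.le hth.le)
        (show h / (t + h) + t / (t + h) = 1 by rw [← add_div, add_comm, div_self hth.ne'])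
      have heq : (h / (t + h)) • (a / h) + (t / (t + h)) • (b / t) = (a + b) / (t + h) := by
        simp only [smul_eq_mul]
        field_simp
      rw [heq] at hconv
      have hfin : (t + h) * L ((a + b) / (t + h)) ≤ h * L (a / h) + t * L (b / t) := by
        have := mul_le_mul_of_nonneg_left hconv hth.le
        simp only [smul_eq_mul] at this
        calc (t + h) * L ((a + b) / (t + h)) ≤
            (t + h) * (h / (t + h) * L (a / h) + t / (t + h) * L (b / t)) := this
        _ = h * L (a / h) + t * L (b / t) := by field_simp
      have : (t + h) * L (dist x y / (t + h)) ≤ (t + h) * L ((a + b) / (t + h)) :=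
        mul_le_mul_of_nonneg_left hmono hth.le
      linarith
    have h1 : (⨅ y : X, ((t + h) * L (dist x y / (t + h)) + g y)) - h * L (dist x z / h) ≤
        ⨅ y : X, (t * L (dist z y / t) + g y) := by
      apply le_ciInf
      intro y
      have h2 := ciInf_le (bdd (t + h) hth x) y
      have h3 := step y
      linarith
    linarith
  -- the slope converges to D
  have hslope : Tendsto (slope (fun s => hopfLaxQ L g s x) t) (𝓝[≠] t) (𝓝 D) :=
    hasDerivAt_iff_tendsto_slope.mp hD
  have hmonoq : ∀ h : ℝ, 0 < h → hopfLaxQ L g (t + h) x ≤ hopfLaxQ L g t x := by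
    intro h hh
    have := lemA h hh x
    simpa [dist_self, hL0] using this
  have hD0 : D ≤ 0 := by
    have h2 : Tendsto (slope (fun s => hopfLaxQ L g s x) t) (𝓝[>] t) (𝓝 D) :=
      hslope.mono_left (nhdsWithin_mono _ fun s hs => ne_of_gt hs)
    refine le_of_tendsto h2 ?_
    filter_upwards [self_mem_nhdsWithin] with s hs
    have hst : 0 < s - t := sub_pos.mpr hs
    have hle : hopfLaxQ L g s x ≤ hopfLaxQ L g t x := by
      have := hmonoq (s - t) hst
      rwa [add_sub_cancel] at this
    rw [slope_def_field]
    exact div_nonpos_of_nonpos_of_nonneg (by linarith) hst.le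
  -- main slope estimate
  have main : ∀ v : ℝ, 0 < v →
      metricSubgradient (fun y => hopfLaxQ L g t y) x ≤ (L v - D) / v := by
    intro v hv
    by_cases hbot : (𝓝[≠] x) = ⊥
    · have h0 : metricSubgradient (fun y => hopfLaxQ L g t y) x = 0 := by
        unfold metricSubgradient
        rw [hbot]
        have huniv : {a : ℝ | ∀ᶠ z in (⊥ : Filter X),
            max (hopfLaxQ L g t x - hopfLaxQ L g t z) 0 / dist z x ≤ a} = Set.univ := by
          ext a; simp
        rw [Filter.limsup_eq, huniv]
        refine Real.sInf_of_not_bddBelow ?_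
        rintro ⟨b, hb⟩
        have := hb (Set.mem_univ (b - 1))
        linarith
      rw [h0]
      exact div_nonneg (by linarith [hLnonneg v hv.le]) hv.le
    · haveI : (𝓝[≠] x).NeBot := ⟨hbot⟩
      refine le_of_forall_pos_le_add ?_
      intro ε hε
      unfold metricSubgradient
      refine Filter.limsup_le_of_le
        (isCoboundedUnder_le_of_le _ fun z =>
          div_nonneg (le_max_right _ 0) dist_nonneg) ?_
      have hεv : 0 < ε * v := mul_pos hε hv
      have hball := hslope.eventually (Metric.ball_mem_nhds D hεv)
      obtain ⟨δ, hδ0, hδsub⟩ := Metric.mem_nhdsWithin_iff.mp hball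
      filter_upwards [mem_nhdsWithin_of_mem_nhds
        (Metric.ball_mem_nhds x (by positivity : (0:ℝ) < δ * v)), self_mem_nhdsWithin]
        with z hz hzne
      have hzx : z ≠ x := hzne
      have hxz : 0 < dist x z := dist_pos.mpr fun e => hzx e.symm
      set h : ℝ := dist x z / v with hhdef
      have hh0 : 0 < h := div_pos hxz hv
      have hdxz : dist x z = h * v := by rw [hhdef]; field_simp
      have hA := lemA h hh0 z
      have hxzh : dist x z / h = v := by rw [hdxz]; field_simp
      rw [hxzh] at hA
      -- slope bound at t + h
      have hhlt : h < δ := by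
        have : dist x z < δ * v := by
          rw [dist_comm]; exact mem_ball.mp hz
        rw [hhdef, div_lt_iff₀ hv]; linarith
      have hts : (t + h) ∈ Metric.ball t δ ∩ {t}ᶜ := by
        constructor
        · rw [mem_ball, Real.dist_eq]
          rw [abs_of_pos (by linarith : (0:ℝ) < t + h - t)]
          linarith
        · simp only [Set.mem_compl_iff, Set.mem_singleton_iff]
          intro e; linarith [hh0]
      have hslopeb := hδsub hts
      simp only [Set.mem_setOf_eq, mem_ball, Real.dist_eq] at hslopeb
      rw [slope_def_field, add_sub_cancel_left] at hslopeb
      have habs := (abs_lt.mp hslopeb).1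
      -- (Q_{t+h} x - Q_t x)/h > D - εv
      have h1 : hopfLaxQ L g t x - hopfLaxQ L g (t + h) x ≤ h * (ε * v - D) := by
        have h2 : D - ε * v < (hopfLaxQ L g (t + h) x - hopfLaxQ L g t x) / h := by
          linarith
        have h3 := (lt_div_iff₀ hh0).mp h2
        nlinarith
      have hcomb : hopfLaxQ L g t x - hopfLaxQ L g t z ≤ h * (L v - D + ε * v) := by
        nlinarith
      have hRHS0 : 0 ≤ h * (L v - D + ε * v) :=
        mul_nonneg hh0.le (by linarith [hLnonneg v hv.le])
      have hmax : max (hopfLaxQ L g t x - hopfLaxQ L g t z) 0 ≤ h * (L v - D + ε * v) :=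
        max_le hcomb hRHS0
      have hdzx : dist z x = h * v := by rw [dist_comm]; exact hdxz
      rw [hdzx, div_le_iff₀ (by positivity : (0:ℝ) < h * v)]
      calc max (hopfLaxQ L g t x - hopfLaxQ L g t z) 0 ≤ h * (L v - D + ε * v) := hmax
      _ = ((L v - D) / v + ε) * (h * v) := by field_simp
  -- conclusion
  have hHle : legendreH L (metricSubgradient (fun y => hopfLaxQ L g t y) x) ≤ -D := by
    apply Real.sSup_le
    · rintro b ⟨v, hv, rfl⟩
      simp only [Set.mem_Ici] at hv
      dsimp only
      rcases eq_or_lt_of_le hv with hv0 | hv0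
      · simp only [← hv0, mul_zero, hL0, sub_zero, zero_sub]
        linarith
      · have h1 := main v hv0
        have h2 : metricSubgradient (fun y => hopfLaxQ L g t y) x * v ≤ L v - D := by
          rw [← le_div_iff₀ hv0]; exact h1
        linarith
    · linarith
  linarith
end

section
/- Let (X,d) be a proper geodesic metric space with a Borel probability measure μ, let q > 2, p > 1 with 1/p + 1/q = 1, and consider the Hopf–Lax semigroup Q_t f(x) = inf_{y ∈ X}[ d(x,y)^p/(p·t^{p−1}) + f(y) ]. If there exist a, ρ > 0 such that for every bounded measurable f : X → ℝ and every t ≥ 0, (∫_X e^{(a+ρt)·Q_t f} dμ)^{1/(a+ρt)} ≤ (∫_X e^{a·f} dμ)^{1/a}, then every bounded continuous nonnegative function f : X → ℝ satisfies μ-esssup_X f ≤ ∫_X f dμ. In particular, the hypercontractivity of the Hopf–Lax semigroup fails for q > 2 whenever some bounded continuous nonnegative function has μ-essential supremum strictly larger than its μ-mean. -/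
open Metric Filter NNReal Topology MeasureTheory

/-- Hopf–Lax semigroup with Lagrangian `L(u) = u^p/p`:
`Q_t f(x) = inf_y [ d(x,y)^p/(p·t^{p−1}) + f(y) ]`, and `Q_0 f = f`. -/
noncomputable def hopfLaxP {X : Type*} [MetricSpace X] (p : ℝ) (f : X → ℝ)
    (t : ℝ) (x : X) : ℝ :=
  if t = 0 then f x else ⨅ y : X, (dist x y ^ p / (p * t ^ (p - 1)) + f y)

section Aux

set_option linter.unusedSectionVars false

variable {X : Type*} [MetricSpace X] [ProperSpace X] [Nonempty X]
    [MeasurableSpace X] [BorelSpace X]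

lemma aux_bdd (f : X → ℝ) (hf0 : ∀ x, 0 ≤ f x) (p c : ℝ) (hc : 0 ≤ c) (x : X) :
    BddBelow (Set.range fun y : X => dist x y ^ p / c + f y) := by
  refine ⟨0, ?_⟩
  rintro _ ⟨y, rfl⟩
  exact add_nonneg (div_nonneg (Real.rpow_nonneg dist_nonneg _) hc) (hf0 y)

lemma aux_meas (f : X → ℝ) (hf : Continuous f) (hf0 : ∀ x, 0 ≤ f x)
    (p c : ℝ) (hp0 : 0 ≤ p) (hc : 0 ≤ c) :
    Measurable fun x => ⨅ y : X, dist x y ^ p / c + f y := by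
  obtain ⟨u, hu⟩ : ∃ u : ℕ → X, DenseRange u :=
    ⟨TopologicalSpace.denseSeq X, TopologicalSpace.denseRange_denseSeq X⟩
  have key : ∀ x, (⨅ y : X, dist x y ^ p / c + f y)
      = ⨅ n : ℕ, dist x (u n) ^ p / c + f (u n) := by
    intro x
    have hb := aux_bdd f hf0 p c hc x
    have hb2 : BddBelow (Set.range fun n : ℕ => dist x (u n) ^ p / c + f (u n)) := by
      refine ⟨0, ?_⟩
      rintro _ ⟨n, rfl⟩
      exact add_nonneg (div_nonneg (Real.rpow_nonneg dist_nonneg _) hc) (hf0 _)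
    refine le_antisymm (le_ciInf fun n => ciInf_le hb (u n)) (le_ciInf fun y => ?_)
    refine le_of_forall_pos_le_add fun ε hε => ?_
    have hcont : Continuous fun z : X => dist x z ^ p / c + f z :=
      (((continuous_const.dist continuous_id).rpow_const fun z => Or.inr hp0).div_const c).add hf
    have hopen : IsOpen {z : X | dist x z ^ p / c + f z < dist x y ^ p / c + f y + ε} :=
      isOpen_lt hcont continuous_const
    obtain ⟨n, hn⟩ := hu.exists_mem_open hopen ⟨y, by simp only [Set.mem_setOf_eq]; linarith⟩
    exact le_trans (ciInf_le hb2 n) (le_of_lt hn)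
  simp only [key]
  refine Measurable.iInf fun n => ?_
  exact ((((continuous_id.dist continuous_const).rpow_const fun z => Or.inr hp0).div_const
    c).add continuous_const).measurable

lemma aux_scaling (f : X → ℝ) (p q T lam : ℝ) (hp : 1 < p) (hpq : q + p = p * q)
    (hT : 0 < T) (hl : 0 < lam) (x : X) :
    (⨅ y : X, dist x y ^ p / (p * (T * lam ^ (1 - q)) ^ (p - 1)) + lam * f y)
      = lam * ⨅ y : X, dist x y ^ p / (p * T ^ (p - 1)) + f y := by
  rw [Real.mul_iInf_of_nonneg hl.le]
  refine iInf_congr fun y => ?_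
  have hqp : (1 - q) * (p - 1) = -1 := by nlinarith
  have h1 : (T * lam ^ (1 - q)) ^ (p - 1) = T ^ (p - 1) * lam⁻¹ := by
    rw [Real.mul_rpow hT.le (Real.rpow_nonneg hl.le _), ← Real.rpow_mul hl.le, hqp,
      Real.rpow_neg_one]
  rw [h1]
  have h2 : p * T ^ (p - 1) ≠ 0 := by positivity
  field_simp

end Aux

section Main

set_option linter.unusedSectionVars false
set_option maxHeartbeats 1000000

variable {X : Type*} [MetricSpace X] [ProperSpace X] [Nonempty X]
    [MeasurableSpace X] [BorelSpace X]

lemma aux_step1 (μ : Measure X) [IsProbabilityMeasure μ]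
    (p q : ℝ) (hq : 2 < q) (hp : 1 < p) (hpq : q + p = p * q)
    (a ρ : ℝ) (ha : 0 < a) (hρ : 0 < ρ)
    (hhc : ∀ f : X → ℝ, Measurable f → (∃ M : ℝ, ∀ x, |f x| ≤ M) → ∀ t : ℝ, 0 ≤ t →
      (∫ x, Real.exp ((a + ρ * t) * hopfLaxP p f t x) ∂μ) ^ (1 / (a + ρ * t)) ≤
        (∫ x, Real.exp (a * f x) ∂μ) ^ (1 / a))
    (f : X → ℝ) (hfc : Continuous f) (hf0 : ∀ x, 0 ≤ f x) (M : ℝ) (hM : ∀ x, f x ≤ M)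
    (T : ℝ) (hT : 0 < T) (m : ℝ)
    (hA : μ {x | m < ⨅ y : X, dist x y ^ p / (p * T ^ (p - 1)) + f y} ≠ 0) :
    m ≤ ∫ x, f x ∂μ := by
  have hp0 : 0 < p := lt_trans one_pos hp
  have hq0 : 0 < q := by linarith
  have hM0 : 0 ≤ M := le_trans (hf0 (Classical.arbitrary X)) (hM _)
  set I := ∫ x, f x ∂μ with hI
  set c₀ := p * T ^ (p - 1) with hc₀
  have hc₀0 : 0 < c₀ := by positivity
  set g : X → ℝ := fun x => ⨅ y : X, dist x y ^ p / c₀ + f y with hg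
  have hgmeas : Measurable g := aux_meas f hfc hf0 p c₀ hp0.le hc₀0.le
  have hg0 : ∀ x, 0 ≤ g x := fun x => le_ciInf fun y =>
    add_nonneg (div_nonneg (Real.rpow_nonneg dist_nonneg _) hc₀0.le) (hf0 y)
  have hgM : ∀ x, g x ≤ M := by
    intro x
    refine le_trans (ciInf_le (aux_bdd f hf0 p c₀ hc₀0.le x) x) ?_
    rw [dist_self, Real.zero_rpow hp0.ne', zero_div, zero_add]
    exact hM x
  set A := {x | m < g x} with hAdef
  have hAmeas : MeasurableSet A := measurableSet_lt measurable_const hgmeas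
  set α := (μ A).toReal with hα
  have hα0 : 0 < α := ENNReal.toReal_pos hA (measure_ne_top μ A)
  have hα1 : α ≤ 1 := by
    rw [hα]
    exact ENNReal.toReal_le_of_le_ofReal one_pos.le (by simpa using prob_le_one (μ := μ) (s := A))
  set B := -Real.log α with hB
  have hB0 : 0 ≤ B := by
    rw [hB, neg_nonneg]
    exact Real.log_nonpos hα0.le hα1
  have claim : ∀ lam : ℝ, 0 < lam → lam ≤ 1 → lam * (a * (M + 1)) ≤ 1 →
      m ≤ I + a * lam * M ^ 2 + B / (ρ * T) * lam ^ (q - 2) := by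
    intro lam hl hl1 hlA
    set t := T * lam ^ (1 - q) with ht
    have ht0 : 0 < t := mul_pos hT (Real.rpow_pos_of_pos hl _)
    set c := a + ρ * t with hc
    have hc0 : 0 < c := by positivity
    have hmb : Measurable fun x => lam * f x := (continuous_const.mul hfc).measurable
    have hbd : ∃ M', ∀ x, |lam * f x| ≤ M' := by
      refine ⟨lam * M, fun x => ?_⟩
      rw [abs_of_nonneg (mul_nonneg hl.le (hf0 x))]
      exact mul_le_mul_of_nonneg_left (hM x) hl.le
    have H := hhc (fun x => lam * f x) hmb hbd t ht0.le
    have hrw : ∀ x, hopfLaxP p (fun x => lam * f x) t x = lam * g x := by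
      intro x
      simp only [hopfLaxP, if_neg ht0.ne', ht, hg]
      rw [if_neg (mul_pos hT (Real.rpow_pos_of_pos hl _)).ne']
      exact aux_scaling f p q T lam hp hpq hT hl x
    simp only [hrw] at H
    have hgint : Integrable (fun x => Real.exp (c * (lam * g x))) μ := by
      refine ⟨(Real.measurable_exp.comp
        (measurable_const.mul (measurable_const.mul hgmeas))).aestronglyMeasurable, ?_⟩
      refine HasFiniteIntegral.of_bounded (C := Real.exp (c * (lam * M))) ?_
      filter_upwards with x
      rw [Real.norm_eq_abs, abs_of_pos (Real.exp_pos _)]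
      exact Real.exp_le_exp.2
        (mul_le_mul_of_nonneg_left (mul_le_mul_of_nonneg_left (hgM x) hl.le) hc0.le)
    have hL1 : α * Real.exp (c * (lam * m)) ≤ ∫ x, Real.exp (c * (lam * g x)) ∂μ := by
      have e1 : α * Real.exp (c * (lam * m)) = ∫ _x in A, Real.exp (c * (lam * m)) ∂μ := by
        rw [setIntegral_const, smul_eq_mul]
        rfl
      rw [e1]
      refine le_trans (setIntegral_mono_on (integrableOn_const (measure_ne_top μ A))
        hgint.integrableOn hAmeas fun x hx => ?_)
        (setIntegral_le_integral hgint (Eventually.of_forall fun x => (Real.exp_pos _).le))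
      have hx' : m < g x := hx
      exact Real.exp_le_exp.2
        (mul_le_mul_of_nonneg_left (mul_le_mul_of_nonneg_left hx'.le hl.le) hc0.le)
    have hLHS : (α * Real.exp (c * (lam * m))) ^ (1 / c)
        ≤ (∫ x, Real.exp (c * (lam * g x)) ∂μ) ^ (1 / c) :=
      Real.rpow_le_rpow (by positivity) hL1 (by positivity)
    have hfint : Integrable f μ := ⟨hfc.aestronglyMeasurable,
      HasFiniteIntegral.of_bounded (C := M) (Eventually.of_forall fun x => by
        rw [Real.norm_eq_abs, abs_of_nonneg (hf0 x)]; exact hM x)⟩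
    have hexpint : Integrable (fun x => Real.exp (a * (lam * f x))) μ :=
      ⟨(Real.measurable_exp.comp
        (measurable_const.mul (measurable_const.mul hfc.measurable))).aestronglyMeasurable,
        HasFiniteIntegral.of_bounded (C := Real.exp (a * (lam * M)))
          (Eventually.of_forall fun x => by
            rw [Real.norm_eq_abs, abs_of_pos (Real.exp_pos _)]
            refine Real.exp_le_exp.2 (mul_le_mul_of_nonneg_left ?_ ha.le)
            exact mul_le_mul_of_nonneg_left (hM x) hl.le)⟩
    have hkey : ∀ x, Real.exp (a * (lam * f x)) ≤ (1 + (a * lam * M) ^ 2) + a * lam * f x := by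
      intro x
      set u := a * (lam * f x) with hu
      have hu0 : 0 ≤ u := by
        rw [hu]; have := hf0 x; positivity
      have huM : u ≤ a * lam * M := by
        rw [hu, ← mul_assoc]
        have h1 : lam * f x ≤ lam * M := mul_le_mul_of_nonneg_left (hM x) hl.le
        calc a * lam * f x = a * (lam * f x) := by ring
        _ ≤ a * (lam * M) := mul_le_mul_of_nonneg_left h1 ha.le
        _ = a * lam * M := by ring
      have hu1 : u ≤ 1 := le_trans huM (by nlinarith)
      have h := Real.exp_bound (n := 2) (x := u) (by rw [abs_of_nonneg hu0]; exact hu1)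
        (by norm_num)
      rw [abs_of_nonneg hu0] at h
      simp [Finset.sum_range_succ] at h
      rw [abs_le] at h
      norm_num at h
      have h2 : u ^ 2 ≤ (a * lam * M) ^ 2 := by nlinarith
      have h3 : Real.exp u ≤ 1 + u + u ^ 2 := by nlinarith [h.2]
      have h4 : u = a * lam * f x := by rw [hu]; ring
      nlinarith [h2, h3]
    have hR1 : ∫ x, Real.exp (a * (lam * f x)) ∂μ ≤ (1 + (a * lam * M) ^ 2) + a * lam * I := by
      have hint2 : Integrable (fun x => (1 + (a * lam * M) ^ 2) + a * lam * f x) μ :=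
        (integrable_const _).add (hfint.const_mul _)
      refine le_trans (integral_mono hexpint hint2 hkey) ?_
      rw [integral_add (integrable_const _) (hfint.const_mul _), integral_const,
        integral_const_mul]
      simp [measure_univ]
      exact le_rfl
    have hI0 : 0 ≤ I := integral_nonneg hf0
    have hR2 : (∫ x, Real.exp (a * (lam * f x)) ∂μ) ^ (1 / a)
        ≤ Real.exp (lam * I + a * lam ^ 2 * M ^ 2) := by
      have h1 : ∫ x, Real.exp (a * (lam * f x)) ∂μ
          ≤ Real.exp (a * lam * I + (a * lam * M) ^ 2) := by
        refine le_trans hR1 ?_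
        have := Real.add_one_le_exp (a * lam * I + (a * lam * M) ^ 2)
        linarith
      have h2 := Real.rpow_le_rpow (integral_nonneg fun x => (Real.exp_pos _).le) h1
        (by positivity : (0:ℝ) ≤ 1 / a)
      refine le_trans h2 ?_
      rw [← Real.exp_mul]
      refine le_of_eq (congrArg Real.exp ?_)
      field_simp
    have hchain : (α * Real.exp (c * (lam * m))) ^ (1 / c)
        ≤ Real.exp (lam * I + a * lam ^ 2 * M ^ 2) :=
      le_trans hLHS (le_trans H hR2)
    have hL0 : 0 < (α * Real.exp (c * (lam * m))) ^ (1 / c) := by positivity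
    have hlog := Real.log_le_log hL0 hchain
    rw [Real.log_rpow (by positivity), Real.log_mul hα0.ne' (Real.exp_pos _).ne',
      Real.log_exp, Real.log_exp] at hlog
    have hBc : lam * m ≤ lam * I + a * lam ^ 2 * M ^ 2 + B / c := by
      have he : 1 / c * (Real.log α + c * (lam * m)) = lam * m - B / c := by
        rw [hB]; field_simp; ring
      rw [he] at hlog
      linarith
    have hprod : lam ^ (q - 2) * (lam ^ (1 - q) * lam) = 1 := by
      nth_rewrite 3 [← Real.rpow_one lam]
      rw [← Real.rpow_add hl, ← Real.rpow_add hl,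
        show q - 2 + (1 - q + 1) = 0 by ring, Real.rpow_zero]
    have hstep : B / c ≤ lam * (B / (ρ * T) * lam ^ (q - 2)) := by
      have h4 : B / c ≤ B / (ρ * t) := by
        apply div_le_div_of_nonneg_left hB0 (by positivity)
        nlinarith
      have h5 : B / (ρ * t) = lam * (B / (ρ * T) * lam ^ (q - 2)) := by
        rw [ht]
        have hlq : lam ^ (1 - q) ≠ 0 := (Real.rpow_pos_of_pos hl _).ne'
        field_simp
        linear_combination (Real.log α) * hprod
      rw [h5] at h4
      exact h4
    have hfin : lam * (I + a * lam * M ^ 2 + B / (ρ * T) * lam ^ (q - 2))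
        = lam * I + a * lam ^ 2 * M ^ 2 + lam * (B / (ρ * T) * lam ^ (q - 2)) := by ring
    have : lam * m ≤ lam * (I + a * lam * M ^ 2 + B / (ρ * T) * lam ^ (q - 2)) := by
      rw [hfin]; linarith
    exact le_of_mul_le_mul_left this hl
  have hlim : Tendsto (fun lam : ℝ => I + a * lam * M ^ 2 + B / (ρ * T) * lam ^ (q - 2))
      (𝓝[>] (0:ℝ)) (𝓝 I) := by
    have t1 : Tendsto (fun lam : ℝ => a * lam * M ^ 2) (𝓝 (0:ℝ)) (𝓝 0) := by
      simpa using (show Continuous fun lam : ℝ => a * lam * M ^ 2 by fun_prop).tendsto (0:ℝ)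
    have t2 : Tendsto (fun lam : ℝ => lam ^ (q - 2)) (𝓝[>] (0:ℝ)) (𝓝 0) := by
      have h := (Real.continuousAt_rpow_const 0 (q - 2) (Or.inr (by linarith))).tendsto
      rw [Real.zero_rpow (by intro h'; linarith [sub_eq_zero.mp h'] : q - 2 ≠ 0)] at h
      exact h.mono_left nhdsWithin_le_nhds
    have t2' : Tendsto (fun lam : ℝ => B / (ρ * T) * lam ^ (q - 2)) (𝓝[>] (0:ℝ)) (𝓝 0) := by
      simpa using t2.const_mul (B / (ρ * T))
    simpa using (((tendsto_const_nhds (x := I) (f := 𝓝[>] (0:ℝ))).add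
      (t1.mono_left nhdsWithin_le_nhds)).add t2')
  refine ge_of_tendsto hlim ?_
  have hl0 : 0 < min 1 (1 / (a * (M + 1))) := by positivity
  filter_upwards [Ioc_mem_nhdsGT_of_mem ⟨le_refl (0:ℝ), hl0⟩] with lam hlam
  refine claim lam hlam.1 (le_trans hlam.2 (min_le_left _ _)) ?_
  have h2 : lam ≤ 1 / (a * (M + 1)) := le_trans hlam.2 (min_le_right _ _)
  rw [le_div_iff₀ (by positivity)] at h2
  linarith

lemma aux_conv (f : X → ℝ) (hfc : Continuous f) (hf0 : ∀ x, 0 ≤ f x) (M : ℝ)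
    (hM : ∀ x, f x ≤ M) (p : ℝ) (hp : 1 < p) (m : ℝ) (x : X) (hx : m < f x) :
    ∃ n : ℕ, m < ⨅ y : X, dist x y ^ p / (p * (((n : ℝ) + 1)⁻¹) ^ (p - 1)) + f y := by
  have hp0 : 0 < p := lt_trans one_pos hp
  have hM0 : 0 ≤ M := le_trans (hf0 x) (hM x)
  set ε := (f x - m) / 2 with hε
  have hε0 : 0 < ε := by rw [hε]; linarith
  obtain ⟨δ, hδ0, hδ⟩ := Metric.continuous_iff.mp hfc x ε hε0
  have hbound : 0 < δ ^ p / (p * (M + 1)) := by positivity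
  have htend : Tendsto (fun n : ℕ => (((n : ℝ) + 1)⁻¹) ^ (p - 1)) atTop (𝓝 0) := by
    have h1 : Tendsto (fun n : ℕ => ((n : ℝ) + 1)⁻¹) atTop (𝓝 0) := by
      simpa [one_div] using tendsto_one_div_add_atTop_nhds_zero_nat (𝕜 := ℝ)
    have h2 := (Real.continuousAt_rpow_const 0 (p - 1) (Or.inr (by linarith))).tendsto
    rw [Real.zero_rpow (by intro h'; linarith [sub_eq_zero.mp h'] : p - 1 ≠ 0)] at h2
    exact h2.comp h1
  obtain ⟨n, hn⟩ := (htend.eventually_lt_const hbound).exists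
  set T : ℝ := ((n : ℝ) + 1)⁻¹ with hT
  have hT0 : 0 < T := by positivity
  refine ⟨n, ?_⟩
  have key : ∀ y : X, m + ε ≤ dist x y ^ p / (p * T ^ (p - 1)) + f y := by
    intro y
    by_cases hcase : dist y x < δ
    · have h5 := hδ y hcase
      rw [Real.dist_eq, abs_lt] at h5
      have h6 : m + ε ≤ f y := by
        have : f x = m + 2 * ε := by rw [hε]; ring
        linarith [h5.1]
      refine le_trans h6 (le_add_of_nonneg_left ?_)
      exact div_nonneg (Real.rpow_nonneg dist_nonneg _) (by positivity)
    · push_neg at hcase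
      have hd : δ ≤ dist x y := by rw [dist_comm]; exact hcase
      have h7 : δ ^ p ≤ dist x y ^ p := Real.rpow_le_rpow hδ0.le hd hp0.le
      have h8 : M + 1 ≤ δ ^ p / (p * T ^ (p - 1)) := by
        rw [le_div_iff₀ (by positivity)]
        have h9 : T ^ (p - 1) < δ ^ p / (p * (M + 1)) := hn
        have h10 : (M + 1) * (p * T ^ (p - 1)) < (M + 1) * (p * (δ ^ p / (p * (M + 1)))) := by
          refine mul_lt_mul_of_pos_left (mul_lt_mul_of_pos_left h9 hp0) (by positivity)
        have h11 : (M + 1) * (p * (δ ^ p / (p * (M + 1)))) = δ ^ p := by field_simp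
        linarith
      have h12 : M + 1 ≤ dist x y ^ p / (p * T ^ (p - 1)) := by
        refine le_trans h8 ?_
        gcongr
      have : f x = m + 2 * ε := by rw [hε]; ring
      have := hM x
      linarith [hf0 y, h12]
  have hfin : m + ε ≤ ⨅ y : X, dist x y ^ p / (p * T ^ (p - 1)) + f y := le_ciInf key
  linarith

end Main

/-- For `q > 2`, hypercontractivity of the Hopf–Lax semigroup forces the
essential supremum of every bounded continuous nonnegative function to be at
most its mean; in particular hypercontractivity fails whenever some such
function has essential supremum strictly larger than its μ-mean. -/
theorem no_hypercontractivity_for_q_gt_two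
    {X : Type*} [MetricSpace X] [ProperSpace X] [Nonempty X]
    [MeasurableSpace X] [BorelSpace X]
    (hgeo : ∀ x y : X, ∀ τ : ℝ, 0 ≤ τ → τ ≤ 1 →
      ∃ z : X, dist x z = τ * dist x y ∧ dist z y = (1 - τ) * dist x y)
    (μ : Measure X) [IsProbabilityMeasure μ]
    (p q : ℝ) (hq : 2 < q) (hp : 1 < p) (hpq : 1 / p + 1 / q = 1)
    (a ρ : ℝ) (ha : 0 < a) (hρ : 0 < ρ)
    (hhc : ∀ f : X → ℝ, Measurable f → (∃ M : ℝ, ∀ x, |f x| ≤ M) → ∀ t : ℝ, 0 ≤ t →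
      (∫ x, Real.exp ((a + ρ * t) * hopfLaxP p f t x) ∂μ) ^ (1 / (a + ρ * t)) ≤
        (∫ x, Real.exp (a * f x) ∂μ) ^ (1 / a)) :
    ∀ f : X → ℝ, Continuous f → (∀ x, 0 ≤ f x) → (∃ M : ℝ, ∀ x, f x ≤ M) →
      essSup f μ ≤ ∫ x, f x ∂μ := by
  intro f hfc hf0 hMex
  obtain ⟨M, hM⟩ := hMex
  have hp1 : (0:ℝ) < p := lt_trans one_pos hp
  have hq1 : (0:ℝ) < q := by linarith
  have hpq' : q + p = p * q := by
    field_simp at hpq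
    linarith
  haveI : (MeasureTheory.ae μ).NeBot := ae_neBot.2 (IsProbabilityMeasure.ne_zero μ)
  set I := ∫ x, f x ∂μ with hI
  by_contra hcon
  push_neg at hcon
  set m := (I + essSup f μ) / 2 with hm
  have hm1 : I < m := by rw [hm]; linarith
  have hm2 : m < essSup f μ := by rw [hm]; linarith
  have hpos : μ {x | m < f x} ≠ 0 := by
    intro h0
    have hub : ∀ᵐ x ∂μ, f x ≤ m := by
      rw [MeasureTheory.ae_iff]
      simpa [not_le] using h0
    have hle : essSup f μ ≤ m :=
      limsup_le_of_le (isCoboundedUnder_le_of_le (MeasureTheory.ae μ) fun x => hf0 x) hub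
    linarith
  have hsub : {x | m < f x} ⊆ ⋃ n : ℕ,
      {x | m < ⨅ y : X, dist x y ^ p / (p * (((n : ℝ) + 1)⁻¹) ^ (p - 1)) + f y} := by
    intro x hx
    obtain ⟨n, hn⟩ := aux_conv f hfc hf0 M hM p hp m x hx
    exact Set.mem_iUnion.2 ⟨n, hn⟩
  have hex : ∃ n : ℕ,
      μ {x | m < ⨅ y : X, dist x y ^ p / (p * (((n : ℝ) + 1)⁻¹) ^ (p - 1)) + f y} ≠ 0 := by
    by_contra hall
    push_neg at hall
    exact hpos (measure_mono_null hsub (measure_iUnion_null hall))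
  obtain ⟨n, hn⟩ := hex
  have hfinal := aux_step1 μ p q hq hp hpq' a ρ ha hρ hhc f hfc hf0 M hM
    (((n : ℝ) + 1)⁻¹) (by positivity) m hn
  rw [← hI] at hfinal
  linarith
end
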